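/- For any finite positive Borel measures α and β on X with finite first moments, Q(α) + Q(β) = Q(α + β); that is, η ∈ Q(α + β) if and only if η = η₁ + η₂ for some η₁ ∈ Q(α) and η₂ ∈ Q(β). -/

import Mathlib

open MeasureTheory RealInnerProductSpace
open scoped ENNReal NNReal

noncomputable section

variable {d : ℕ}

/-- The set `Q(α)` of finite positive martingale measures on `X × X` with finite
first moments and first marginal `α`. -/
def Qmart (X : Set (EuclideanSpace ℝ (Fin d))) (α : Measure ↥X) :
    Set (Measure (↥X × ↥X)) :=
  {η | IsFiniteMeasure η ∧
    Integrable (fun p : ↥X × ↥X =>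
      2 + ‖(p.1 : EuclideanSpace ℝ (Fin d))‖ + ‖(p.2 : EuclideanSpace ℝ (Fin d))‖) η ∧
    η.map Prod.fst = α ∧
    ∀ γ : ↥X → EuclideanSpace ℝ (Fin d), Continuous γ → (∃ M : ℝ, ∀ x, ‖γ x‖ ≤ M) →
      (∫ p : ↥X × ↥X,
        ⟪γ p.1, (p.1 : EuclideanSpace ℝ (Fin d)) - (p.2 : EuclideanSpace ℝ (Fin d))⟫ ∂η) = 0}

local notation "E" => EuclideanSpace ℝ (Fin d)

/-- weight function -/
def wgt {X : Set (EuclideanSpace ℝ (Fin d))} (p : ↥X × ↥X) : ℝ :=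
  2 + ‖(p.1 : EuclideanSpace ℝ (Fin d))‖ + ‖(p.2 : EuclideanSpace ℝ (Fin d))‖

lemma wgt_nonneg {X : Set E} (p : ↥X × ↥X) : (0:ℝ) ≤ wgt p := by
  unfold wgt; positivity

lemma wgt_continuous {X : Set E} : Continuous (wgt (X := X)) := by
  unfold wgt
  fun_prop

lemma aux_map_withDensity {A B : Type*} [MeasurableSpace A] [MeasurableSpace B]
    (μ : Measure A) {T : A → B} (hT : Measurable T) {f : B → ℝ≥0∞} (hf : Measurable f) :
    (μ.withDensity (fun a => f (T a))).map T = (μ.map T).withDensity f := by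
  ext s hs
  rw [Measure.map_apply hT hs, withDensity_apply _ hs, withDensity_apply _ (hT hs),
    setLIntegral_map hs hf hT]

/-- Generic integrability lemma. -/
lemma aux_integrable {X : Set E} {η : Measure (↥X × ↥X)}
    (hint : Integrable (wgt (X := X)) η)
    {h : ↥X → ℝ} (hh : AEStronglyMeasurable (fun p : ↥X × ↥X => h p.1) η)
    {C : ℝ} (hC0 : 0 ≤ C) (hC : ∀ x, |h x| ≤ C)
    {G : ↥X × ↥X → ℝ} (hG : AEStronglyMeasurable G η)
    {K : ℝ} (hK0 : 0 ≤ K) (hK : ∀ p, |G p| ≤ K * wgt p) :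
    Integrable (fun p => h p.1 * G p) η := by
  refine (hint.const_mul (C * K)).mono (hh.mul hG) (ae_of_all _ fun p => ?_)
  have h1 : ‖h p.1 * G p‖ = |h p.1| * |G p| := by
    rw [Real.norm_eq_abs, abs_mul]
  have hw := wgt_nonneg p
  have := hC p.1
  have := hK p
  have habs := abs_nonneg (h p.1)
  have habs2 := abs_nonneg (G p)
  rw [h1, Real.norm_eq_abs]
  have : |h p.1| * |G p| ≤ C * (K * wgt p) := by nlinarith
  calc |h p.1| * |G p| ≤ C * (K * wgt p) := this
    _ = C * K * wgt p := by ring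
    _ ≤ |C * K * wgt p| := le_abs_self _

/-- the inner-product integrand is dominated by `M * wgt`. -/
lemma aux_inner_bound {X : Set E} {γ : ↥X → E} {M : ℝ} (hM : ∀ x, ‖γ x‖ ≤ M) (hM0 : 0 ≤ M)
    (p : ↥X × ↥X) :
    |⟪γ p.1, (p.1 : E) - (p.2 : E)⟫| ≤ M * wgt p := by
  have h1 := abs_real_inner_le_norm (γ p.1) ((p.1 : E) - (p.2 : E))
  have h2 : ‖(p.1 : E) - (p.2 : E)‖ ≤ wgt p := by
    refine (norm_sub_le _ _).trans ?_
    unfold wgt; nlinarith [norm_nonneg (p.1 : E), norm_nonneg (p.2 : E)]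
  have h3 := hM p.1
  nlinarith [norm_nonneg (γ p.1), norm_nonneg ((p.1 : E) - (p.2 : E)),
    abs_nonneg (⟪γ p.1, (p.1 : E) - (p.2 : E)⟫)]

lemma aux_inner_cont {X : Set E} {γ : ↥X → E} (hγ : Continuous γ) :
    Continuous (fun p : ↥X × ↥X => ⟪γ p.1, (p.1 : E) - (p.2 : E)⟫) := by
  exact Continuous.inner (hγ.comp continuous_fst)
    ((continuous_subtype_val.comp continuous_fst).sub
      (continuous_subtype_val.comp continuous_snd))

/-- Key lemma: the martingale property extends to bounded measurable multipliers. -/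
lemma aux_key {X : Set E} {η : Measure (↥X × ↥X)} [IsFiniteMeasure η]
    (hint : Integrable (wgt (X := X)) η)
    (hmg : ∀ γ : ↥X → E, Continuous γ → (∃ M : ℝ, ∀ x, ‖γ x‖ ≤ M) →
      (∫ p : ↥X × ↥X, ⟪γ p.1, (p.1 : E) - (p.2 : E)⟫ ∂η) = 0)
    {h : ↥X → ℝ} (hh : Measurable h) {C : ℝ} (hC0 : 0 ≤ C) (hC : ∀ x, |h x| ≤ C)
    {γ : ↥X → E} (hγc : Continuous γ) {M : ℝ} (hM0 : 0 ≤ M) (hM : ∀ x, ‖γ x‖ ≤ M) :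
    (∫ p : ↥X × ↥X, h p.1 * ⟪γ p.1, (p.1 : E) - (p.2 : E)⟫ ∂η) = 0 := by
  set G : ↥X × ↥X → ℝ := fun p => ⟪γ p.1, (p.1 : E) - (p.2 : E)⟫ with hG_def
  have hGc : Continuous G := aux_inner_cont hγc
  have hGb : ∀ p, |G p| ≤ M * wgt p := aux_inner_bound hM hM0
  -- the reference measure on ↥X
  set ν : Measure ↥X :=
    (η.withDensity (fun p => ENNReal.ofReal (wgt p))).map Prod.fst with hν_def
  have hwmeas : Measurable (fun p : ↥X × ↥X => (wgt p).toNNReal) :=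
    wgt_continuous.measurable.real_toNNReal
  haveI : IsFiniteMeasure (η.withDensity (fun p => ENNReal.ofReal (wgt p))) :=
    isFiniteMeasure_withDensity_ofReal hint.2
  haveI : IsFiniteMeasure ν := by
    rw [hν_def]; exact Measure.isFiniteMeasure_map _ _
  -- integral identity
  have hkey : ∀ F : ↥X → ℝ, Measurable F →
      ∫ x, F x ∂ν = ∫ p, F p.1 * wgt p ∂η := by
    intro F hF
    rw [hν_def, integral_map measurable_fst.aemeasurable hF.aestronglyMeasurable]
    have : (fun p : ↥X × ↥X => ENNReal.ofReal (wgt p)) =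
        fun p : ↥X × ↥X => ((wgt p).toNNReal : ℝ≥0∞) := rfl
    rw [this, integral_withDensity_eq_integral_smul hwmeas]
    congr 1
    ext p
    rw [NNReal.smul_def, Real.coe_toNNReal _ (wgt_nonneg p), smul_eq_mul, mul_comm]
  set I := ∫ p : ↥X × ↥X, h p.1 * G p ∂η with hI_def
  have hIh : Integrable (fun p => h p.1 * G p) η :=
    aux_integrable hint ((hh.comp measurable_fst).aestronglyMeasurable) hC0 hC
      hGc.measurable.aestronglyMeasurable hM0 hGb
  suffices hsuf : ∀ ε : ℝ, 0 < ε → |I| ≤ ε by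
    have : |I| ≤ 0 := le_of_forall_pos_le_add (by intro ε hε; simpa using hsuf ε hε)
    exact abs_nonpos_iff.mp this
  intro ε hε
  set ε' : ℝ := ε / (M + 1) with hε'_def
  have hε' : 0 < ε' := div_pos hε (by linarith)
  -- h is integrable w.r.t. ν
  have hInt_h : Integrable h ν := by
    refine Integrable.mono' (integrable_const C) hh.aestronglyMeasurable
      (ae_of_all _ fun x => ?_)
    rw [Real.norm_eq_abs]; exact hC x
  obtain ⟨g, hg_close, hg_int⟩ := hInt_h.exists_boundedContinuous_integral_sub_le hε'
  -- the martingale property for g • γ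
  have hg0 : ∫ p : ↥X × ↥X, g p.1 * G p ∂η = 0 := by
    have := hmg (fun x => g x • γ x) (g.continuous.smul hγc)
      ⟨‖g‖ * M, fun x => by
        rw [norm_smul]
        exact mul_le_mul (g.norm_coe_le_norm x) (hM x) (norm_nonneg _) (norm_nonneg g)⟩
    refine Eq.trans ?_ this
    congr 1
    ext p
    exact (real_inner_smul_left (γ p.1) _ (g p.1)).symm
  have hIg : Integrable (fun p => g p.1 * G p) η :=
    aux_integrable hint ((g.continuous.measurable.comp measurable_fst).aestronglyMeasurable)
      (norm_nonneg g) (fun x => by simpa [Real.norm_eq_abs] using g.norm_coe_le_norm x)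
      hGc.measurable.aestronglyMeasurable hM0 hGb
  have hdiff : I = ∫ p : ↥X × ↥X, (h p.1 - g p.1) * G p ∂η := by
    rw [hI_def, ← sub_zero (∫ p : ↥X × ↥X, h p.1 * G p ∂η), ← hg0, ← integral_sub hIh hIg]
    congr 1; ext p; ring
  have hmeas_hg : Measurable (fun x : ↥X => |h x - g x|) :=
    (hh.sub g.continuous.measurable).abs
  have hInt_rhs : Integrable (fun p : ↥X × ↥X => |h p.1 - g p.1| * wgt p) η := by
    refine aux_integrable hint ((hmeas_hg.comp measurable_fst).aestronglyMeasurable)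
      (C := C + ‖g‖) (by positivity)
      (fun x => by
        rw [abs_abs]
        exact (abs_sub _ _).trans (add_le_add (hC x)
          (by simpa [Real.norm_eq_abs] using g.norm_coe_le_norm x)))
      wgt_continuous.measurable.aestronglyMeasurable (K := 1) one_pos.le
      (fun p => by rw [one_mul]; exact le_of_eq (abs_of_nonneg (wgt_nonneg p)))
  have hstep : |I| ≤ M * ∫ x, |h x - g x| ∂ν := by
    rw [hdiff, hkey _ hmeas_hg, ← Real.norm_eq_abs]
    refine (norm_integral_le_integral_norm _).trans ?_
    rw [← integral_const_mul]
    refine integral_mono_of_nonneg (ae_of_all _ fun p => norm_nonneg _)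
      (hInt_rhs.const_mul M) (ae_of_all _ fun p => ?_)
    show ‖(h p.1 - g p.1) * G p‖ ≤ M * (|h p.1 - g p.1| * wgt p)
    rw [Real.norm_eq_abs, abs_mul]
    have := hGb p
    have h2 := abs_nonneg (h p.1 - g p.1)
    have := abs_nonneg (G p)
    nlinarith
  have hclose : ∫ x, |h x - g x| ∂ν ≤ ε' := by
    simpa [Real.norm_eq_abs] using hg_close
  calc |I| ≤ M * ∫ x, |h x - g x| ∂ν := hstep
    _ ≤ M * ε' := mul_le_mul_of_nonneg_left hclose hM0
    _ ≤ (M + 1) * ε' := by nlinarith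
    _ = ε := by rw [hε'_def]; field_simp

theorem stmt16
    (X : Set (EuclideanSpace ℝ (Fin d))) (hXcl : IsClosed X) (hXcv : Convex ℝ X)
    (α β : Measure ↥X) [IsFiniteMeasure α] [IsFiniteMeasure β]
    (hα : Integrable (fun x : ↥X => ‖(x : EuclideanSpace ℝ (Fin d))‖) α)
    (hβ : Integrable (fun x : ↥X => ‖(x : EuclideanSpace ℝ (Fin d))‖) β)
    (η : Measure (↥X × ↥X)) :
    η ∈ Qmart X (α + β) ↔
      ∃ η₁ ∈ Qmart X α, ∃ η₂ ∈ Qmart X β, η = η₁ + η₂ := by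
  constructor
  · rintro ⟨hfin, hint, hmap, hmg⟩
    haveI := hfin
    have hintw : Integrable (wgt (X := X)) η := hint
    have hac : α ≪ α + β := (Measure.le_add_right le_rfl).absolutelyContinuous
    set f : ↥X → ℝ≥0 := fun x => min (α.rnDeriv (α + β) x).toNNReal 1 with hf_def
    have hfmeas : Measurable f :=
      (Measure.measurable_rnDeriv α (α + β)).ennreal_toNNReal.min measurable_const
    have hf_le : ∀ x, f x ≤ 1 := fun x => min_le_right _ _
    have hf_ae : (fun x => (f x : ℝ≥0∞)) =ᵐ[α + β] α.rnDeriv (α + β) := by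
      filter_upwards [Measure.rnDeriv_le_one_of_le (show α ≤ α + β from Measure.le_add_right le_rfl),
        Measure.rnDeriv_lt_top α (α + β)] with x h1 hlt
      have hne : α.rnDeriv (α + β) x ≠ ∞ := hlt.ne
      have h1' : α.rnDeriv (α + β) x ≤ 1 := h1
      have hmin : min (α.rnDeriv (α + β) x).toNNReal 1 = (α.rnDeriv (α + β) x).toNNReal :=
        min_eq_left (by
          have := ENNReal.toNNReal_mono (by simp) h1'
          simpa using this)
      simp only [hf_def, hmin]
      exact ENNReal.coe_toNNReal hne
    have hwd : (α + β).withDensity (fun x => (f x : ℝ≥0∞)) = α := by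
      rw [withDensity_congr_ae hf_ae, Measure.withDensity_rnDeriv_eq α (α + β) hac]
    set η₁ : Measure (↥X × ↥X) := η.withDensity (fun p => ((f p.1 : ℝ≥0) : ℝ≥0∞)) with hη₁
    set η₂ : Measure (↥X × ↥X) := η.withDensity (fun p => (((1 - f p.1 : ℝ≥0)) : ℝ≥0∞)) with hη₂
    have hsum : η₁ + η₂ = η := by
      rw [hη₁, hη₂,
        ← withDensity_add_left (f := fun p : ↥X × ↥X => ((f p.1 : ℝ≥0) : ℝ≥0∞))
          (show Measurable fun p : ↥X × ↥X => ((f p.1 : ℝ≥0) : ℝ≥0∞) from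
            measurable_coe_nnreal_ennreal.comp (hfmeas.comp measurable_fst))
          (fun p : ↥X × ↥X => (((1 - f p.1 : ℝ≥0)) : ℝ≥0∞))]
      have hone : (fun p : ↥X × ↥X => ((f p.1 : ℝ≥0∞) + ((1 - f p.1 : ℝ≥0) : ℝ≥0∞))) = 1 := by
        funext p
        rw [← ENNReal.coe_add, add_tsub_cancel_of_le (hf_le p.1)]
        simp
      rw [show ((fun p : ↥X × ↥X => ((f p.1 : ℝ≥0) : ℝ≥0∞)) +
          fun p => (((1 - f p.1 : ℝ≥0)) : ℝ≥0∞)) =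
          (fun p : ↥X × ↥X => ((f p.1 : ℝ≥0∞) + ((1 - f p.1 : ℝ≥0) : ℝ≥0∞))) from rfl,
        hone, withDensity_one]
    have hle₁ : η₁ ≤ η := hsum ▸ Measure.le_add_right le_rfl
    have hle₂ : η₂ ≤ η := hsum ▸ Measure.le_add_left le_rfl
    have hmap1 : η₁.map Prod.fst = α := by
      rw [hη₁,
        aux_map_withDensity η measurable_fst
          (f := fun x : ↥X => ((f x : ℝ≥0) : ℝ≥0∞))
          (measurable_coe_nnreal_ennreal.comp hfmeas),
        hmap, hwd]
    have hmap2 : η₂.map Prod.fst = β := by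
      have h2 : (α + β).withDensity (fun x : ↥X => (((1 - f x : ℝ≥0)) : ℝ≥0∞)) = β := by
        have hadd := congrArg (fun m : Measure (↥X × ↥X) => m.map Prod.fst) hsum
        simp only [Measure.map_add _ _ measurable_fst] at hadd
        rw [hmap1] at hadd
        rw [hη₂,
          aux_map_withDensity η measurable_fst
            (f := fun x : ↥X => (((1 - f x : ℝ≥0)) : ℝ≥0∞))
            (measurable_coe_nnreal_ennreal.comp (hfmeas.const_sub 1)), hmap] at hadd
        -- hadd : α + withDensity .. = α + β
        ext s hs
        have := congrArg (fun m : Measure ↥X => m s) hadd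
        simp only [Measure.add_apply] at this
        exact ENNReal.add_right_inj (measure_ne_top α s) |>.mp this
      rw [hη₂,
        aux_map_withDensity η measurable_fst
          (f := fun x : ↥X => (((1 - f x : ℝ≥0)) : ℝ≥0∞))
          (measurable_coe_nnreal_ennreal.comp (hfmeas.const_sub 1)), hmap, h2]
    have hmg1 : ∀ γ : ↥X → E, Continuous γ → (∃ M : ℝ, ∀ x, ‖γ x‖ ≤ M) →
        (∫ p : ↥X × ↥X, ⟪γ p.1, (p.1 : E) - (p.2 : E)⟫ ∂η₁) = 0 := by
      rintro γ hγc ⟨M, hM⟩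
      have hM' : ∀ x, ‖γ x‖ ≤ max M 0 := fun x => (hM x).trans (le_max_left _ _)
      rw [hη₁, integral_withDensity_eq_integral_smul (f := fun p : ↥X × ↥X => f p.1)
        (show Measurable fun p : ↥X × ↥X => f p.1 from hfmeas.comp measurable_fst)]
      simp_rw [NNReal.smul_def, smul_eq_mul]
      exact aux_key (h := fun x : ↥X => ((f x : ℝ))) hintw hmg
        (measurable_coe_nnreal_real.comp hfmeas) zero_le_one
        (fun x => by
          rw [abs_of_nonneg (f x).coe_nonneg]
          exact_mod_cast hf_le x)
        hγc (le_max_right M 0) hM'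
    have hmg2 : ∀ γ : ↥X → E, Continuous γ → (∃ M : ℝ, ∀ x, ‖γ x‖ ≤ M) →
        (∫ p : ↥X × ↥X, ⟪γ p.1, (p.1 : E) - (p.2 : E)⟫ ∂η₂) = 0 := by
      rintro γ hγc ⟨M, hM⟩
      have hM' : ∀ x, ‖γ x‖ ≤ max M 0 := fun x => (hM x).trans (le_max_left _ _)
      rw [hη₂, integral_withDensity_eq_integral_smul (f := fun p : ↥X × ↥X => 1 - f p.1)
        (show Measurable fun p : ↥X × ↥X => 1 - f p.1 from
          (hfmeas.const_sub 1).comp measurable_fst)]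
      simp_rw [NNReal.smul_def, smul_eq_mul]
      exact aux_key (h := fun x : ↥X => (((1 - f x : ℝ≥0) : ℝ))) hintw hmg
        (measurable_coe_nnreal_real.comp (hfmeas.const_sub 1)) zero_le_one
        (fun x => by
          rw [abs_of_nonneg (1 - f x).coe_nonneg]
          exact_mod_cast tsub_le_self)
        hγc (le_max_right M 0) hM'
    exact ⟨η₁, ⟨isFiniteMeasure_of_le η hle₁, hint.mono_measure hle₁, hmap1, hmg1⟩,
      η₂, ⟨isFiniteMeasure_of_le η hle₂, hint.mono_measure hle₂, hmap2, hmg2⟩, hsum.symm⟩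
  · rintro ⟨η₁, ⟨h1fin, h1int, h1map, h1mg⟩, η₂, ⟨h2fin, h2int, h2map, h2mg⟩, rfl⟩
    haveI := h1fin; haveI := h2fin
    refine ⟨inferInstance, h1int.add_measure h2int, ?_, ?_⟩
    · rw [Measure.map_add _ _ measurable_fst, h1map, h2map]
    · rintro γ hγc ⟨M, hM⟩
      have hM' : ∀ x, ‖γ x‖ ≤ max M 0 := fun x => (hM x).trans (le_max_left _ _)
      have hint1 : Integrable (fun p : ↥X × ↥X => ⟪γ p.1, (p.1 : E) - (p.2 : E)⟫) η₁ := by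
        have := aux_integrable (G := fun p : ↥X × ↥X => ⟪γ p.1, (p.1 : E) - (p.2 : E)⟫)
          (h := fun _ : ↥X => (1 : ℝ)) (h1int : Integrable (wgt (X := X)) η₁)
          aestronglyMeasurable_const zero_le_one (fun _ => by norm_num)
          (aux_inner_cont hγc).measurable.aestronglyMeasurable (le_max_right M 0)
          (aux_inner_bound hM' (le_max_right M 0))
        simpa using this
      have hint2 : Integrable (fun p : ↥X × ↥X => ⟪γ p.1, (p.1 : E) - (p.2 : E)⟫) η₂ := by
        have := aux_integrable (G := fun p : ↥X × ↥X => ⟪γ p.1, (p.1 : E) - (p.2 : E)⟫)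
          (h := fun _ : ↥X => (1 : ℝ)) (h2int : Integrable (wgt (X := X)) η₂)
          aestronglyMeasurable_const zero_le_one (fun _ => by norm_num)
          (aux_inner_cont hγc).measurable.aestronglyMeasurable (le_max_right M 0)
          (aux_inner_bound hM' (le_max_right M 0))
        simpa using this
      rw [integral_add_measure hint1 hint2, h1mg γ hγc ⟨M, hM⟩, h2mg γ hγc ⟨M, hM⟩, add_zero]

end
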